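/- Let f : 𝔻 → ℂ be a continuous map on the open unit disk, let y ∈ ℂ, and let K and K' be two distinct connected components of f⁻¹{y} with closure(K) ⊂ 𝔻 and closure(K') ⊂ 𝔻. Then there exists r_{K,K'} > 0 such that for every r ∈ (0, r_{K,K'}), the sets K and K' are contained in different connected components of f⁻¹(B²(y, r)). -/

import Mathlib

open MeasureTheory Metric Set Filter Topology

noncomputable section

/-- The open unit disk in the complex plane. -/
def unitDisk : Set ℂ := Metric.ball 0 1

/-- The unit circle in the complex plane. -/
def unitCircle : Set ℂ := Metric.sphere 0 1

/-- `g` is a distributional (weak) partial derivative of `h` on `Ω` in the direction `v`: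
integration by parts against smooth test functions compactly supported in `Ω`. -/
def HasWeakPartialDeriv (Ω : Set ℂ) (h g : ℂ → ℂ) (v : ℂ) : Prop :=
  ∀ φ : ℂ → ℝ, ContDiff ℝ (⊤ : ℕ∞) φ → HasCompactSupport φ → tsupport φ ⊆ Ω →
    ∫ z in Ω, (fderiv ℝ φ z v) • h z = - ∫ z in Ω, φ z • g z

/-- Membership in the Sobolev space `W^{1,2}(Ω, ℂ)`: the map and both weak partial
derivatives are in `L²(Ω)`. -/
def MemW12 (Ω : Set ℂ) (h : ℂ → ℂ) : Prop :=
  MemLp h 2 (volume.restrict Ω) ∧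
  ∃ gx gy : ℂ → ℂ, HasWeakPartialDeriv Ω h gx 1 ∧ HasWeakPartialDeriv Ω h gy Complex.I ∧
    MemLp gx 2 (volume.restrict Ω) ∧ MemLp gy 2 (volume.restrict Ω)

/-- Membership in `W^{1,2}_loc(Ω, ℂ)`. -/
def MemW12loc (Ω : Set ℂ) (h : ℂ → ℂ) : Prop :=
  ∀ z ∈ Ω, ∃ ε > 0, Metric.ball z ε ⊆ Ω ∧ MemW12 (Metric.ball z ε) h

/-- Membership in `W^{1,2}_0(Ω, ℂ)`: the closure of smooth compactly supported maps in
the `W^{1,2}`-norm, expressed via an approximating sequence. -/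
def MemW120 (Ω : Set ℂ) (h : ℂ → ℂ) : Prop :=
  ∃ gx gy : ℂ → ℂ,
    HasWeakPartialDeriv Ω h gx 1 ∧ HasWeakPartialDeriv Ω h gy Complex.I ∧
    MemLp h 2 (volume.restrict Ω) ∧ MemLp gx 2 (volume.restrict Ω) ∧
    MemLp gy 2 (volume.restrict Ω) ∧
    ∃ φ : ℕ → ℂ → ℂ,
      (∀ n, ContDiff ℝ (⊤ : ℕ∞) (φ n) ∧ HasCompactSupport (φ n) ∧ tsupport (φ n) ⊆ Ω) ∧
      Tendsto (fun n => eLpNorm (fun z => h z - φ n z) 2 (volume.restrict Ω)) atTop (nhds 0) ∧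
      Tendsto (fun n => eLpNorm (fun z => gx z - fderiv ℝ (φ n) z 1) 2 (volume.restrict Ω))
        atTop (nhds 0) ∧
      Tendsto (fun n => eLpNorm (fun z => gy z - fderiv ℝ (φ n) z Complex.I) 2
        (volume.restrict Ω)) atTop (nhds 0)

/-- The Wirtinger derivative `∂h/∂z` computed from the partial derivatives
`gx = ∂h/∂x` and `gy = ∂h/∂y`. -/
def wirtZ (gx gy : ℂ → ℂ) (z : ℂ) : ℂ := (gx z - Complex.I * gy z) / 2

/-- The Wirtinger derivative `∂h/∂z̄` computed from the partial derivatives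
`gx = ∂h/∂x` and `gy = ∂h/∂y`. -/
def wirtZBar (gx gy : ℂ → ℂ) (z : ℂ) : ℂ := (gx z + Complex.I * gy z) / 2

/-- The Jacobian determinant `J_h = |h_z|² - |h_z̄|²` computed from the partial
derivatives `gx = ∂h/∂x` and `gy = ∂h/∂y`. -/
def jacDet (gx gy : ℂ → ℂ) (z : ℂ) : ℝ :=
  ‖wirtZ gx gy z‖ ^ 2 - ‖wirtZBar gx gy z‖ ^ 2

/-- `J_h ≥ 0` almost everywhere on `Ω` (with respect to a weak gradient of `h`). -/
def JacNonnegAE (Ω : Set ℂ) (h : ℂ → ℂ) : Prop :=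
  ∃ gx gy : ℂ → ℂ, HasWeakPartialDeriv Ω h gx 1 ∧ HasWeakPartialDeriv Ω h gy Complex.I ∧
    ∀ᵐ z ∂(volume.restrict Ω), 0 ≤ jacDet gx gy z

/-- The Wirtinger derivative `∂ψ/∂z̄` of a (smooth) map `ψ`. -/
def dzbar (ψ : ℂ → ℂ) (z : ℂ) : ℂ :=
  (fderiv ℝ ψ z 1 + Complex.I * fderiv ℝ ψ z Complex.I) / 2

/-- `h` satisfies the Hopf-Laplace equation `∂_z̄ (h_z ⬝ conj h_z̄) = 0` on `Ω` in the
sense of distributions. -/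
def SatisfiesHopfLaplace (Ω : Set ℂ) (h : ℂ → ℂ) : Prop :=
  ∃ gx gy : ℂ → ℂ, HasWeakPartialDeriv Ω h gx 1 ∧ HasWeakPartialDeriv Ω h gy Complex.I ∧
    ∀ ψ : ℂ → ℂ, ContDiff ℝ (⊤ : ℕ∞) ψ → HasCompactSupport ψ → tsupport ψ ⊆ Ω →
      ∫ z in Ω, (wirtZ gx gy z * (starRingEnd ℂ) (wirtZBar gx gy z)) * dzbar ψ z = 0

/-- `f` restricts to a homeomorphism of `A` onto `B`. -/
def IsHomeoOn (f : ℂ → ℂ) (A B : Set ℂ) : Prop :=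
  ContinuousOn f A ∧ Set.BijOn f A B ∧
    ∃ g : ℂ → ℂ, ContinuousOn g B ∧ (∀ x ∈ A, g (f x) = x) ∧ ∀ y ∈ B, f (g y) = y

/-- A Jordan domain: a bounded, simply connected planar domain whose boundary is a
Jordan curve (a homeomorphic image of the circle). -/
def IsJordanDomain (X : Set ℂ) : Prop :=
  IsOpen X ∧ Bornology.IsBounded X ∧ IsConnected X ∧ SimplyConnectedSpace ↥X ∧
    ∃ φ : ℂ → ℂ, ContinuousOn φ unitCircle ∧ Set.InjOn φ unitCircle ∧
      φ '' unitCircle = frontier X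

/-- A domain is Lipschitz if its boundary is locally the graph of a Lipschitz function
(up to a rigid motion of the plane). -/
def IsLipschitzDomain (Y : Set ℂ) : Prop :=
  ∀ p ∈ frontier Y, ∃ (e : ℂ ≃ᵢ ℂ) (r : ℝ) (L : NNReal) (φ : ℝ → ℝ),
    0 < r ∧ LipschitzWith L φ ∧ e p = 0 ∧
    ∀ z ∈ Metric.ball (0 : ℂ) r, (e.symm z ∈ Y ↔ φ z.re < z.im)

/-- `h` satisfies the Lusin (N) condition on `Ω`: sets of measure zero are mapped to
sets of measure zero. -/
def LusinN (Ω : Set ℂ) (h : ℂ → ℂ) : Prop :=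
  ∀ E ⊆ Ω, volume E = 0 → volume (h '' E) = 0

/-- The pointwise Jacobian determinant of a (smooth) map `g : ℂ → ℂ` viewed as a map
of the plane. -/
def realJac (g : ℂ → ℂ) (z : ℂ) : ℝ :=
  (fderiv ℝ g z 1).re * (fderiv ℝ g z Complex.I).im -
    (fderiv ℝ g z 1).im * (fderiv ℝ g z Complex.I).re

/-- `d` is the Brouwer degree of `h` at the point `y` with respect to the bounded open
set `U` (`h` continuous on `closure U`, `y ∉ h(∂U)`), characterized analytically: for
every smooth map `g` uniformly close to `h` on `closure U` and every smooth probability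
density `ψ` concentrated near `y`, the integral `∫_U ψ(g) J_g` equals `d`. -/
def HasDegreeAt (h : ℂ → ℂ) (y : ℂ) (U : Set ℂ) (d : ℤ) : Prop :=
  ∃ ε > 0, (∀ z ∈ frontier U, ε ≤ dist y (h z)) ∧
    ∀ g : ℂ → ℂ, ContDiff ℝ (⊤ : ℕ∞) g → (∀ z ∈ closure U, dist (g z) (h z) < ε / 2) →
      ∀ ψ : ℂ → ℝ, ContDiff ℝ (⊤ : ℕ∞) ψ → HasCompactSupport ψ →
        tsupport ψ ⊆ Metric.ball y (ε / 2) → (∫ w, ψ w) = 1 →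
        (∫ z in U, ψ (g z) * realJac g z) = (d : ℝ)

open Classical in
/-- The Dirichlet energy `∫_Ω |Dh|²` of a Sobolev map, computed from a (choice of)
weak gradient; weak gradients are a.e. unique, so the value does not depend on the
choice. -/
def dirichletEnergy (Ω : Set ℂ) (h : ℂ → ℂ) : ℝ :=
  if hW : ∃ p : (ℂ → ℂ) × (ℂ → ℂ),
      HasWeakPartialDeriv Ω h p.1 1 ∧ HasWeakPartialDeriv Ω h p.2 Complex.I then
    ∫ z in Ω, (‖hW.choose.1 z‖ ^ 2 + ‖hW.choose.2 z‖ ^ 2)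
  else 0

/-- The conformal capacity of the condenser `(K, U)`. -/
def conformalCapacity (K U : Set ℂ) : ℝ :=
  sInf {E : ℝ | ∃ u : ℂ → ℝ, ContDiff ℝ (⊤ : ℕ∞) u ∧ HasCompactSupport u ∧
    tsupport u ⊆ U ∧ (∀ z ∈ K, 1 ≤ u z) ∧ E = ∫ z in U, ‖fderiv ℝ u z‖ ^ 2}

/-- The `K`-oscillation property of a map `H` on an open set `U`. -/
def KOscillationProperty (K : ℝ) (U : Set ℂ) (H : ℂ → ℂ) : Prop :=
  ∀ z ∈ U, ∀ᵐ r ∂(volume.restrict (Set.Ioo (0 : ℝ) (Metric.infDist z Uᶜ))),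
    EMetric.diam (H '' Metric.ball z r) ≤
      ENNReal.ofReal K * EMetric.diam (H '' Metric.sphere z r)

/-- The set of connected components of a set `A`. -/
def componentsIn (A : Set ℂ) : Set (Set ℂ) := {C | ∃ x ∈ A, C = connectedComponentIn A x}

/-- There exist an open ball `B` and a nonempty connected component `U` of `h⁻¹(B)`
(in the unit disk) on which the Jacobian of `h` vanishes almost everywhere. -/
def HasZeroJacComponent (h : ℂ → ℂ) : Prop :=
  ∃ (y : ℂ) (r : ℝ) (x : ℂ) (gx gy : ℂ → ℂ), 0 < r ∧
    x ∈ unitDisk ∩ h ⁻¹' Metric.ball y r ∧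
    HasWeakPartialDeriv unitDisk h gx 1 ∧ HasWeakPartialDeriv unitDisk h gy Complex.I ∧
    ∀ᵐ z ∂(volume.restrict (connectedComponentIn (unitDisk ∩ h ⁻¹' Metric.ball y r) x)),
      jacDet gx gy z = 0

/-- The real interval `(a, b)` with extended-real endpoints. -/
def erealIoo (a b : EReal) : Set ℝ := {t : ℝ | a < (t : EReal) ∧ (t : EReal) < b}

/-- The filter describing `t → c` (where `c` is an endpoint, possibly infinite) within
the interval `(a, b)`. -/
def endpointFilter (a b c : EReal) : Filter ℝ :=
  Filter.comap (fun t : ℝ => (t : EReal)) (nhdsWithin c (Set.Ioo a b))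

/-- `γ : (a,b) → Ω` is a vertical arc of the quadratic differential `g dz ⊗ dz`:
a smooth curve with `g(γ(t))·γ'(t)² < 0` everywhere. -/
def IsVerticalArcOn (g : ℂ → ℂ) (Ω : Set ℂ) (a b : EReal) (γ : ℝ → ℂ) : Prop :=
  (∀ t ∈ erealIoo a b, γ t ∈ Ω) ∧ ContDiffOn ℝ (⊤ : ℕ∞) γ (erealIoo a b) ∧
    ∀ t ∈ erealIoo a b, ∃ c : ℝ, c < 0 ∧ g (γ t) * (deriv γ t) ^ 2 = (c : ℂ)

/-- `γ : (a,b) → Ω` is a horizontal arc of the quadratic differential `g dz ⊗ dz`: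
a smooth curve with `g(γ(t))·γ'(t)² > 0` everywhere. -/
def IsHorizontalArcOn (g : ℂ → ℂ) (Ω : Set ℂ) (a b : EReal) (γ : ℝ → ℂ) : Prop :=
  (∀ t ∈ erealIoo a b, γ t ∈ Ω) ∧ ContDiffOn ℝ (⊤ : ℕ∞) γ (erealIoo a b) ∧
    ∀ t ∈ erealIoo a b, ∃ c : ℝ, 0 < c ∧ g (γ t) * (deriv γ t) ^ 2 = (c : ℂ)

/-- A vertical trajectory: a maximal vertical arc. -/
def IsVerticalTrajectory (g : ℂ → ℂ) (Ω : Set ℂ) (a b : EReal) (γ : ℝ → ℂ) : Prop :=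
  IsVerticalArcOn g Ω a b γ ∧
    ∀ (a' b' : EReal) (γ' : ℝ → ℂ), IsVerticalArcOn g Ω a' b' γ' →
      a' ≤ a → b ≤ b' → Set.EqOn γ γ' (erealIoo a b) → a' = a ∧ b' = b

/-- A horizontal trajectory: a maximal horizontal arc. -/
def IsHorizontalTrajectory (g : ℂ → ℂ) (Ω : Set ℂ) (a b : EReal) (γ : ℝ → ℂ) : Prop :=
  IsHorizontalArcOn g Ω a b γ ∧
    ∀ (a' b' : EReal) (γ' : ℝ → ℂ), IsHorizontalArcOn g Ω a' b' γ' →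
      a' ≤ a → b ≤ b' → Set.EqOn γ γ' (erealIoo a b) → a' = a ∧ b' = b

/-- The arc `γ` exits a critical point (a zero of the coefficient `g`) of the
quadratic differential at one of its endpoints. -/
def ExitsCriticalPoint (g : ℂ → ℂ) (Ω : Set ℂ) (a b : EReal) (γ : ℝ → ℂ) : Prop :=
  ∃ z ∈ Ω, g z = 0 ∧
    (Tendsto γ (endpointFilter a b a) (nhds z) ∨ Tendsto γ (endpointFilter a b b) (nhds z))


/-- If `K` and `K'` are distinct connected components of `f⁻¹{y}` with closures in
`𝔻`, then for all sufficiently small `r > 0` they lie in different connected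
components of `f⁻¹(B²(y,r))`. -/
theorem small_radius_components_separate
    (f : ℂ → ℂ) (hf : ContinuousOn f unitDisk) (y : ℂ)
    (x x' : ℂ) (hx : x ∈ unitDisk ∩ f ⁻¹' {y}) (hx' : x' ∈ unitDisk ∩ f ⁻¹' {y})
    (hne : connectedComponentIn (unitDisk ∩ f ⁻¹' {y}) x ≠
      connectedComponentIn (unitDisk ∩ f ⁻¹' {y}) x')
    (hK : closure (connectedComponentIn (unitDisk ∩ f ⁻¹' {y}) x) ⊆ unitDisk)
    (hK' : closure (connectedComponentIn (unitDisk ∩ f ⁻¹' {y}) x') ⊆ unitDisk) :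
    ∃ r₀ > 0, ∀ r ∈ Set.Ioo (0 : ℝ) r₀,
      connectedComponentIn (unitDisk ∩ f ⁻¹' Metric.ball y r) x ≠
        connectedComponentIn (unitDisk ∩ f ⁻¹' Metric.ball y r) x' := by
  classical
  have hDopen : IsOpen unitDisk := Metric.isOpen_ball
  set S : Set ℂ := unitDisk ∩ f ⁻¹' {y} with hS_def
  -- auxiliary: closure points (inside the disk) of subsets of the fiber are in the fiber
  have aux : ∀ A : Set ℂ, A ⊆ f ⁻¹' {y} → ∀ z ∈ closure A, z ∈ unitDisk → f z = y := by
    intro A hA z hz hzD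
    have hca : ContinuousAt f z := hf.continuousAt (hDopen.mem_nhds hzD)
    have h1 : f z ∈ closure (f '' A) := mem_closure_image hca hz
    have himg : f '' A ⊆ {y} := by rintro _ ⟨a, ha, rfl⟩; exact hA ha
    have h2 : f z ∈ closure ({y} : Set ℂ) := closure_mono himg h1
    rwa [closure_singleton, Set.mem_singleton_iff] at h2
  set K : Set ℂ := connectedComponentIn S x with hKdef
  set K' : Set ℂ := connectedComponentIn S x' with hK'def
  have hKS : K ⊆ S := connectedComponentIn_subset _ _
  have hK'S : K' ⊆ S := connectedComponentIn_subset _ _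
  have hSy : S ⊆ f ⁻¹' {y} := Set.inter_subset_right
  have hSD : S ⊆ unitDisk := Set.inter_subset_left
  have hclK : closure K ⊆ K := by
    apply IsPreconnected.subset_connectedComponentIn
      isPreconnected_connectedComponentIn.closure
      (subset_closure (mem_connectedComponentIn hx))
    intro z hz
    exact ⟨hK hz, aux K (hKS.trans hSy) z hz (hK hz)⟩
  have hclK' : closure K' ⊆ K' := by
    apply IsPreconnected.subset_connectedComponentIn
      isPreconnected_connectedComponentIn.closure
      (subset_closure (mem_connectedComponentIn hx'))
    intro z hz
    exact ⟨hK' hz, aux K' (hK'S.trans hSy) z hz (hK' hz)⟩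
  have hKclosed : IsClosed K := isClosed_of_closure_subset hclK
  have hK'closed : IsClosed K' := isClosed_of_closure_subset hclK'
  have hKcomp : IsCompact K :=
    Metric.isCompact_of_isClosed_isBounded hKclosed
      (Metric.isBounded_ball.subset (hKS.trans hSD))
  have hK'comp : IsCompact K' :=
    Metric.isCompact_of_isClosed_isBounded hK'closed
      (Metric.isBounded_ball.subset (hK'S.trans hSD))
  have hdisjKK' : Disjoint K K' := by
    rw [Set.disjoint_left]
    intro z hzK hzK'
    exact hne ((connectedComponentIn_eq hzK).trans (connectedComponentIn_eq hzK').symm)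
  -- a compact "window" T around K ∪ K'
  set CC : Set ℂ := K ∪ K' with hCCdef
  have hCCcomp : IsCompact CC := hKcomp.union hK'comp
  have hCCD : CC ⊆ unitDisk := Set.union_subset (hKS.trans hSD) (hK'S.trans hSD)
  obtain ⟨δ, hδ, hδsub⟩ := hCCcomp.exists_thickening_subset_open hDopen hCCD
  set T : Set ℂ := Metric.cthickening (δ / 2) CC with hTdef
  have hTcomp : IsCompact T := hCCcomp.cthickening
  have hTD : T ⊆ unitDisk :=
    (Metric.cthickening_subset_thickening' hδ (half_lt_self hδ) CC).trans hδsub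
  set W : Set ℂ := Metric.thickening (δ / 2) CC with hWdef
  have hWT : W ⊆ T := Metric.thickening_subset_cthickening _ _
  have hCCW : CC ⊆ W := Metric.self_subset_thickening (half_pos hδ) _
  set ST : Set ℂ := T ∩ f ⁻¹' {y} with hSTdef
  have hSTcl : IsClosed ST := by
    apply isClosed_of_closure_subset
    intro z hz
    have hzT : z ∈ T :=
      hTcomp.isClosed.closure_subset_iff.mpr Set.inter_subset_left hz
    exact ⟨hzT, aux ST Set.inter_subset_right z hz (hTD hzT)⟩
  have hSTcomp : IsCompact ST := hTcomp.of_isClosed_subset hSTcl Set.inter_subset_left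
  have hSTS : ST ⊆ S := fun z hz => ⟨hTD hz.1, hz.2⟩
  have hKST : K ⊆ ST := fun z hz => ⟨hWT (hCCW (Or.inl hz)), hSy (hKS hz)⟩
  have hxST : x ∈ ST := hKST (mem_connectedComponentIn hx)
  have hcompT : connectedComponentIn ST x = K := by
    apply Subset.antisymm (connectedComponentIn_mono x hSTS)
    exact isPreconnected_connectedComponentIn.subset_connectedComponentIn
      (mem_connectedComponentIn hx) hKST
  -- a small neighbourhood N of K avoiding K'
  obtain ⟨ε₁, hε₁, hdisjthick⟩ := hdisjKK'.exists_thickenings hKcomp hK'closed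
  set ε : ℝ := min ε₁ (δ / 2) with hεdef
  have hε : 0 < ε := lt_min hε₁ (half_pos hδ)
  set N : Set ℂ := Metric.thickening ε K with hNdef
  have hNK' : Disjoint N K' :=
    hdisjthick.mono (Metric.thickening_mono (min_le_left _ _) K)
      (Metric.self_subset_thickening hε₁ K')
  have hNW : N ⊆ W :=
    (Metric.thickening_mono (min_le_right _ _) K).trans
      (Metric.thickening_subset_of_subset _ Set.subset_union_left)
  have hKN : K ⊆ N := Metric.self_subset_thickening hε K
  -- find a compact relatively clopen A with K ⊆ A ⊆ N, using the compact space ST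
  haveI : CompactSpace ST := isCompact_iff_compactSpace.mp hSTcomp
  set x₀ : ST := ⟨x, hxST⟩ with hx₀def
  have hccsub : connectedComponent x₀ ⊆ (Subtype.val ⁻¹' N : Set ST) := by
    intro w hw
    have hwK : (w : ℂ) ∈ K := by
      rw [← hcompT, connectedComponentIn_eq_image hxST]
      exact ⟨w, hw, rfl⟩
    exact hKN hwK
  haveI : Nonempty {s : Set ST // IsClopen s ∧ x₀ ∈ s} :=
    ⟨⟨Set.univ, isClopen_univ, Set.mem_univ _⟩⟩
  obtain ⟨⟨sA, hsA⟩, hsAN⟩ :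
      ∃ s : {s : Set ST // IsClopen s ∧ x₀ ∈ s}, s.1 ⊆ Subtype.val ⁻¹' N := by
    apply exists_subset_nhds_of_compactSpace
      (V := fun s : {s : Set ST // IsClopen s ∧ x₀ ∈ s} => s.1)
    · rintro ⟨s, hs, hxs⟩ ⟨t, ht, hxt⟩
      exact ⟨⟨s ∩ t, hs.inter ht, ⟨hxs, hxt⟩⟩, Set.inter_subset_left, Set.inter_subset_right⟩
    · exact fun s => s.2.1.1
    · intro z hz
      rw [← connectedComponent_eq_iInter_isClopen x₀] at hz
      exact (Metric.isOpen_thickening.preimage continuous_subtype_val).mem_nhds (hccsub hz)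
  set A : Set ℂ := Subtype.val '' sA with hAdef
  have hAST : A ⊆ ST := by rintro _ ⟨w, _, rfl⟩; exact w.2
  have hAN : A ⊆ N := by rintro _ ⟨w, hw, rfl⟩; exact hsAN hw
  have hKA : K ⊆ A := by
    rw [← hcompT, connectedComponentIn_eq_image hxST]
    exact Set.image_mono (hsA.1.connectedComponent_subset hsA.2)
  have hAcomp : IsCompact A := hsA.1.1.isCompact.image continuous_subtype_val
  obtain ⟨O, hOopen, hOA⟩ := isOpen_induced_iff.mp hsA.1.2
  set O' : Set ℂ := O ∩ W with hO'def
  have hO' : IsOpen O' := hOopen.inter Metric.isOpen_thickening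
  have hAeq : A = O' ∩ S := by
    apply Subset.antisymm
    · rintro _ ⟨w, hw, rfl⟩
      refine ⟨⟨?_, hNW (hsAN hw)⟩, hSTS w.2⟩
      rw [← hOA] at hw; exact hw
    · rintro z ⟨⟨hzO, hzW⟩, hzS⟩
      have hzST : z ∈ ST := ⟨hWT hzW, hzS.2⟩
      exact ⟨⟨z, hzST⟩, by rw [← hOA]; exact hzO, rfl⟩
  have hAO' : A ⊆ O' := by rw [hAeq]; exact Set.inter_subset_left
  have hAD : A ⊆ unitDisk := fun z hz => hTD (hAST hz).1
  obtain ⟨δ₃, hδ₃, hδ₃sub⟩ := hAcomp.exists_thickening_subset_open hO' hAO'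
  obtain ⟨δ₄, hδ₄, hδ₄sub⟩ := hAcomp.exists_thickening_subset_open hDopen hAD
  set η : ℝ := min δ₃ δ₄ with hηdef
  have hη : 0 < η := lt_min hδ₃ hδ₄
  set V : Set ℂ := Metric.thickening (η / 2) A with hVdef
  have hVopen : IsOpen V := Metric.isOpen_thickening
  have hAV : A ⊆ V := Metric.self_subset_thickening (half_pos hη) _
  have hclVsub : closure V ⊆ Metric.thickening η A :=
    (Metric.closure_thickening_subset_cthickening _ _).trans
      (Metric.cthickening_subset_thickening' hη (half_lt_self hη) _)
  have hthO' : Metric.thickening η A ⊆ O' :=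
    (Metric.thickening_mono (min_le_left _ _) _).trans hδ₃sub
  have hthD : Metric.thickening η A ⊆ unitDisk :=
    (Metric.thickening_mono (min_le_right _ _) _).trans hδ₄sub
  have hSclV : ∀ z ∈ closure V, z ∈ S → z ∈ A := by
    intro z hz hzS
    rw [hAeq]; exact ⟨hthO' (hclVsub hz), hzS⟩
  have hfr : ∀ z ∈ frontier V, z ∈ unitDisk ∧ f z ≠ y := by
    intro z hz
    have hzcl : z ∈ closure V := hz.1
    have hzD : z ∈ unitDisk := hthD (hclVsub hzcl)
    refine ⟨hzD, fun hfz => ?_⟩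
    have hzS : z ∈ S := ⟨hzD, hfz⟩
    have hzV : z ∈ V := hAV (hSclV z hzcl hzS)
    exact hz.2 (by rw [hVopen.interior_eq]; exact hzV)
  have hfrcomp : IsCompact (frontier V) :=
    (hAcomp.cthickening (r := η / 2)).of_isClosed_subset isClosed_frontier
      (frontier_subset_closure.trans (Metric.closure_thickening_subset_cthickening _ _))
  have hr₀ex : ∃ r₀ > 0, ∀ z ∈ frontier V, r₀ ≤ dist (f z) y := by
    rcases (frontier V).eq_empty_or_nonempty with hfe | hfne
    · exact ⟨1, one_pos, by rw [hfe]; rintro z ⟨⟩⟩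
    · obtain ⟨z₀, hz₀, hmin⟩ := hfrcomp.exists_isMinOn hfne
        (Continuous.comp_continuousOn (continuous_id.dist continuous_const)
          (hf.mono fun z hz => (hfr z hz).1))
      exact ⟨dist (f z₀) y, dist_pos.mpr (fun h => (hfr z₀ hz₀).2 h),
        fun z hz => hmin hz⟩
  obtain ⟨r₀, hr₀pos, hr₀⟩ := hr₀ex
  refine ⟨r₀, hr₀pos, ?_⟩
  rintro r ⟨hr0, hrlt⟩ heq
  set U : Set ℂ := unitDisk ∩ f ⁻¹' Metric.ball y r with hUdef
  have hfx : f x = y := hx.2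
  have hfx' : f x' = y := hx'.2
  have hxU : x ∈ U := ⟨hx.1, by simp [Set.mem_preimage, Metric.mem_ball, hfx, hr0]⟩
  have hx'U : x' ∈ U := ⟨hx'.1, by simp [Set.mem_preimage, Metric.mem_ball, hfx', hr0]⟩
  have hx'C : x' ∈ connectedComponentIn U x := by
    rw [heq]; exact mem_connectedComponentIn hx'U
  have hCU : connectedComponentIn U x ⊆ U := connectedComponentIn_subset _ _
  have hCV : connectedComponentIn U x ⊆ V := by
    apply IsPreconnected.subset_left_of_subset_union hVopen
      isClosed_closure.isOpen_compl (disjoint_compl_right.mono_left subset_closure)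
    · intro z hz
      by_cases hzc : z ∈ closure V
      · left
        by_contra hzV
        have hzfr : z ∈ frontier V := ⟨hzc, by rwa [hVopen.interior_eq]⟩
        have h1 : r₀ ≤ dist (f z) y := hr₀ z hzfr
        have h2 : dist (f z) y < r := (hCU hz).2
        linarith
      · right; exact hzc
    · exact ⟨x, mem_connectedComponentIn hxU, hAV (hKA (mem_connectedComponentIn hx))⟩
    · exact isPreconnected_connectedComponentIn
  have hx'V : x' ∈ V := hCV hx'C
  have hx'A : x' ∈ A := hSclV x' (subset_closure hx'V) hx'
  exact Set.disjoint_left.mp hNK' (hAN hx'A) (mem_connectedComponentIn hx')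

end
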